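/- Let X be a continuous martingale with respect to an increasing filtration (𝒫_t) and simultaneously a (reversed) martingale with respect to a decreasing filtration (ℱ_t) with X_t measurable w.r.t. both 𝒫_t and ℱ_t, and X_t ∈ L². Then X is a.s. constant on [0,T]. -/

import Mathlib

open MeasureTheory

noncomputable section

private lemma mul_int' {Ω : Type*} {m0 : MeasurableSpace Ω} {μ : Measure Ω}
    [IsFiniteMeasure μ] {f g : Ω → ℝ} (hf : MemLp f 2 μ) (hg : MemLp g 2 μ) :
    Integrable (fun ω => f ω * g ω) μ := by
  have hpqr : (1 : ENNReal) / 1 = 1 / 2 + 1 / 2 := by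
    rw [ENNReal.div_add_div_same, ENNReal.div_self (by norm_num) (by norm_num)]
    norm_num
    rw [ENNReal.div_self (by norm_num) (by norm_num)]
  have h : MemLp (f • g) 1 μ := by
    haveI : ENNReal.HolderTriple 2 2 1 := ⟨by rw [ENNReal.inv_two_add_inv_two, inv_one]⟩
    exact hg.smul hf
  exact h.integrable le_rfl

/-- If `f` is `m`-measurable and `μ[g|m] = 0` a.e., then `∫ f * g = 0`. -/
private lemma int_mul_eq_zero {Ω : Type*} {m0 : MeasurableSpace Ω} {μ : Measure Ω}
    [IsProbabilityMeasure μ] {m : MeasurableSpace Ω} (hm : m ≤ m0)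
    {f g : Ω → ℝ} (hfm : Measurable[m] f) (hf : MemLp f 2 μ) (hg : MemLp g 2 μ)
    (hce : μ[g|m] =ᵐ[μ] 0) : ∫ ω, f ω * g ω ∂μ = 0 := by
  have hfg : Integrable (fun ω => f ω * g ω) μ := mul_int' hf hg
  have hgi : Integrable g μ := hg.integrable one_le_two
  have h1 : μ[(fun ω => f ω * g ω)|m] =ᵐ[μ] fun ω => f ω * (μ[g|m]) ω := by
    have := condExp_mul_of_stronglyMeasurable_left (μ := μ) (m := m)
      hfm.stronglyMeasurable hfg hgi
    exact this
  have h2 : μ[(fun ω => f ω * g ω)|m] =ᵐ[μ] 0 := by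
    refine h1.trans ?_
    filter_upwards [hce] with ω hω
    simp [hω]
  calc ∫ ω, f ω * g ω ∂μ = ∫ ω, (μ[(fun ω => f ω * g ω)|m]) ω ∂μ :=
        (integral_condExp hm).symm
    _ = ∫ ω, (0 : Ω → ℝ) ω ∂μ := integral_congr_ae h2
    _ = 0 := by simp

/-- Nelson: a continuous square-integrable process that is a
martingale w.r.t. an increasing filtration `P` and a reversed martingale
w.r.t. a decreasing filtration `F`, adapted to both, is a.s. constant on `[0,T]`. -/
theorem stmt16 {Ω : Type*} {m0 : MeasurableSpace Ω} (μ : Measure Ω)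
    [IsProbabilityMeasure μ] (T : ℝ) (hT : 0 < T)
    (X : ℝ → Ω → ℝ) (P F : ℝ → MeasurableSpace Ω)
    (hPmono : ∀ s t : ℝ, s ≤ t → P s ≤ P t)
    (hFanti : ∀ s t : ℝ, s ≤ t → F t ≤ F s)
    (hPle : ∀ t, P t ≤ m0) (hFle : ∀ t, F t ≤ m0)
    (hXP : ∀ t, Measurable[P t] (X t)) (hXF : ∀ t, Measurable[F t] (X t))
    (hL2 : ∀ t, MemLp (X t) 2 μ)
    (hXcont : ∀ ω, ContinuousOn (fun t => X t ω) (Set.Icc 0 T))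
    (hmart : ∀ s t : ℝ, 0 ≤ s → s ≤ t → t ≤ T →
      μ[fun ω => X t ω - X s ω | P s] =ᵐ[μ] 0)
    (hrev : ∀ s t : ℝ, 0 ≤ s → s ≤ t → t ≤ T →
      μ[fun ω => X s ω - X t ω | F t] =ᵐ[μ] 0) :
    ∀ᵐ ω ∂μ, ∀ t ∈ Set.Icc 0 T, X t ω = X 0 ω := by
  -- Step 1: for each fixed t ∈ [0,T], X t = X 0 a.e.
  have key : ∀ t : ℝ, t ∈ Set.Icc 0 T → X t =ᵐ[μ] X 0 := by
    intro t ht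
    obtain ⟨ht0, htT⟩ := ht
    have hDL2 : MemLp (fun ω => X t ω - X 0 ω) 2 μ := (hL2 t).sub (hL2 0)
    -- E[X 0 * (X t - X 0)] = 0 using forward martingale property at s = 0
    have hA : ∫ ω, X 0 ω * (X t ω - X 0 ω) ∂μ = 0 :=
      int_mul_eq_zero (hPle 0) (hXP 0) (hL2 0) hDL2 (hmart 0 t le_rfl ht0 htT)
    -- E[X t * (X 0 - X t)] = 0 using backward martingale property
    have hB : ∫ ω, X t ω * (X 0 ω - X t ω) ∂μ = 0 :=
      int_mul_eq_zero (hFle t) (hXF t) (hL2 t) ((hL2 0).sub (hL2 t))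
        (hrev 0 t le_rfl ht0 htT)
    -- hence E[(X t - X 0)^2] = 0
    have hsq_int : Integrable (fun ω => (X t ω - X 0 ω) ^ 2) μ := by
      have := mul_int' hDL2 hDL2
      simpa [pow_two] using this
    have hint1 : Integrable (fun ω => X t ω * (X t ω - X 0 ω)) μ :=
      mul_int' (hL2 t) hDL2
    have hint2 : Integrable (fun ω => X 0 ω * (X t ω - X 0 ω)) μ :=
      mul_int' (hL2 0) hDL2
    have hsq : ∫ ω, (X t ω - X 0 ω) ^ 2 ∂μ = 0 := by
      have hsplit : ∀ ω, (X t ω - X 0 ω) ^ 2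
          = X t ω * (X t ω - X 0 ω) - X 0 ω * (X t ω - X 0 ω) := by
        intro ω; ring
      have hC : ∫ ω, X t ω * (X t ω - X 0 ω) ∂μ = 0 := by
        have : ∀ ω, X t ω * (X t ω - X 0 ω) = -(X t ω * (X 0 ω - X t ω)) := by
          intro ω; ring
        rw [show (fun ω => X t ω * (X t ω - X 0 ω))
            = fun ω => -(X t ω * (X 0 ω - X t ω)) from funext this,
          integral_neg, hB, neg_zero]
      calc ∫ ω, (X t ω - X 0 ω) ^ 2 ∂μ
          = ∫ ω, (X t ω * (X t ω - X 0 ω) - X 0 ω * (X t ω - X 0 ω)) ∂μ := by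
            simp_rw [hsplit]
        _ = (∫ ω, X t ω * (X t ω - X 0 ω) ∂μ)
            - ∫ ω, X 0 ω * (X t ω - X 0 ω) ∂μ := integral_sub hint1 hint2
        _ = 0 := by rw [hA, hC]; ring
    have hz : (fun ω => (X t ω - X 0 ω) ^ 2) =ᵐ[μ] 0 :=
      (integral_eq_zero_iff_of_nonneg (fun ω => sq_nonneg _) hsq_int).mp hsq
    filter_upwards [hz] with ω hω
    have : (X t ω - X 0 ω) ^ 2 = 0 := hω
    have := pow_eq_zero_iff (n := 2) (by norm_num) |>.mp this
    linarith [this]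
  -- Step 2: upgrade to a.e. ∀ t via rationals and continuity
  have keyQ : ∀ᵐ ω ∂μ, ∀ q : ℚ, (q : ℝ) ∈ Set.Icc 0 T → X q ω = X 0 ω := by
    rw [ae_all_iff]
    intro q
    by_cases hq : (q : ℝ) ∈ Set.Icc 0 T
    · filter_upwards [key q hq] with ω hω _ using hω
    · filter_upwards with ω h using absurd h hq
  have keyT : ∀ᵐ ω ∂μ, X T ω = X 0 ω := key T ⟨le_of_lt hT, le_rfl⟩
  filter_upwards [keyQ, keyT] with ω hωQ hωT
  intro t ht
  obtain ⟨ht0, htT⟩ := ht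
  rcases eq_or_lt_of_le htT with rfl | htT'
  · exact hωT
  -- t < T: approximate t from the right by rationals in (t, T)
  · -- pick rational sequence q n ∈ (t, min T (t + 1/(n+1)))
    have hpick : ∀ n : ℕ, ∃ q : ℚ, t < (q : ℝ) ∧ (q : ℝ) < min T (t + 1 / (n + 1)) := by
      intro n
      apply exists_rat_btwn
      apply lt_min htT'
      have : (0 : ℝ) < 1 / (n + 1) := by positivity
      linarith
    choose q hq1 hq2 using hpick
    have hqmem : ∀ n, (q n : ℝ) ∈ Set.Icc 0 T := fun n =>
      ⟨le_trans ht0 (le_of_lt (hq1 n)), le_of_lt (lt_of_lt_of_le (hq2 n) (min_le_left _ _))⟩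
    have htend : Filter.Tendsto (fun n => (q n : ℝ)) Filter.atTop (nhds t) := by
      have hub : ∀ n : ℕ, (q n : ℝ) ≤ t + 1 / (n + 1) := fun n =>
        le_of_lt (lt_of_lt_of_le (hq2 n) (min_le_right _ _))
      have hlb : ∀ n : ℕ, t ≤ (q n : ℝ) := fun n => le_of_lt (hq1 n)
      have h1 : Filter.Tendsto (fun n : ℕ => t + 1 / ((n : ℝ) + 1)) Filter.atTop (nhds t) := by
        have := tendsto_one_div_add_atTop_nhds_zero_nat (𝕜 := ℝ)
        have := Filter.Tendsto.const_add t this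
        simpa using this
      exact tendsto_of_tendsto_of_tendsto_of_le_of_le tendsto_const_nhds h1 hlb hub
    have hcw : ContinuousWithinAt (fun s => X s ω) (Set.Icc 0 T) t :=
      hXcont ω t ⟨ht0, htT⟩
    have htend' : Filter.Tendsto (fun n => (q n : ℝ)) Filter.atTop
        (nhdsWithin t (Set.Icc 0 T)) :=
      tendsto_nhdsWithin_of_tendsto_nhds_of_eventually_within _ htend
        (Filter.Eventually.of_forall hqmem)
    have hXlim : Filter.Tendsto (fun n => X (q n) ω) Filter.atTop (nhds (X t ω)) :=
      (hcw.tendsto).comp htend'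
    have hconst : ∀ n, X (q n) ω = X 0 ω := fun n => hωQ (q n) (hqmem n)
    have : Filter.Tendsto (fun _ : ℕ => X 0 ω) Filter.atTop (nhds (X t ω)) := by
      simpa [funext hconst] using hXlim
    exact (tendsto_nhds_unique this tendsto_const_nhds)

end
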